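/- Soundness of the spider fusion rule: for all natural numbers n, m, k with k ≥ 1 and all α, β ∈ ℝ, S(k, m, α) · S(n, k, β) = S(n, m, α + β), where for natural numbers a, b and phase γ, S(a, b, γ) is the matrix indexed by (Fin b → Fin 2) × (Fin a → Fin 2) whose (y, x) entry is 1 if all components of y and x equal 0, e^{iγ} if all components equal 1, and 0 otherwise (i.e. S(a, b, γ) = |0⟩^{⊗b}⟨0|^{⊗a} + e^{iγ}|1⟩^{⊗b}⟨1|^{⊗a}). -/
import Mathlib


open Complex Real

noncomputable section

/-- The matrix interpretation of the green spider with `a` inputs, `b`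
outputs and phase `γ`: `S(a,b,γ) = |0⟩^{⊗b}⟨0|^{⊗a} + e^{iγ}|1⟩^{⊗b}⟨1|^{⊗a}`,
i.e. the `(y,x)` entry is `1` if all components of `y` and `x` are `0`,
`e^{iγ}` if all components are `1`, and `0` otherwise. -/
def spider (a b : ℕ) (γ : ℝ) : Matrix (Fin b → Fin 2) (Fin a → Fin 2) ℂ :=
  Matrix.of fun y x =>
    (if (∀ i, y i = 0) ∧ (∀ i, x i = 0) then 1 else 0)
      + (if (∀ i, y i = 1) ∧ (∀ i, x i = 1) then Complex.exp (γ * Complex.I) else 0)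

/-- Soundness of the spider fusion rule: two green spiders connected by
`k ≥ 1` edges fuse into one green spider whose phase is the sum of the phases. -/
theorem spider_fusion (n m k : ℕ) (hk : 1 ≤ k) (α β : ℝ) :
    spider k m α * spider n k β = spider n m (α + β) := by
  have i0 : Fin k := ⟨0, hk⟩
  ext y x
  rw [Matrix.mul_apply]
  set z0 : Fin k → Fin 2 := fun _ => 0 with hz0
  set z1 : Fin k → Fin 2 := fun _ => 1 with hz1
  have hne : z0 ≠ z1 := by
    intro h
    have := congrFun h i0
    simp [hz0, hz1] at this
  rw [Finset.sum_eq_add_of_mem z0 z1 (Finset.mem_univ _) (Finset.mem_univ _) hne]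
  · simp only [spider, Matrix.of_apply, hz0, hz1]
    have h01 : ¬ ∀ i : Fin k, (0 : Fin 2) = 1 := fun h => absurd (h i0) (by decide)
    have h10 : ¬ ∀ i : Fin k, (1 : Fin 2) = 0 := fun h => absurd (h i0) (by decide)
    simp only [and_true, true_and, implies_true, h01, h10, and_false, false_and, if_false,
      if_true, add_zero, zero_add]
    by_cases hy0 : ∀ i, y i = 0 <;> by_cases hy1 : ∀ i, y i = 1 <;>
      by_cases hx0 : ∀ i, x i = 0 <;> by_cases hx1 : ∀ i, x i = 1 <;>
      simp [hy0, hy1, hx0, hx1, ← Complex.exp_add, add_mul] <;> split_ifs <;> first | rfl | tauto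
  · intro z _ hz
    have hzz0 : ¬ ∀ i, z i = 0 := fun h => hz.1 (funext h)
    have hzz1 : ¬ ∀ i, z i = 1 := fun h => hz.2 (funext h)
    simp [spider, hzz0, hzz1]

end
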